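/- arXiv:1312.7171 — 3 statements merged into one kernel-verified Lean document; each statement's English description precedes it below -/
import Mathlib

section
/- For every nonnegative integer n, S_n^{(r,k)}(x|a_1,…,a_r) = Σ_{l=0}^n ( Σ_{j=l}^n Σ_{m=0}^{n−j} (−1)^{n−m−j} C(n,j) C(j,l) (m!/(m+1)^k) S_2(n−j,m) B_{j−l}(a_1,…,a_r) ) x^l, as an identity of polynomials in x. -/
open PowerSeries Finset

/-- The formal power series `e^{c·t}` over a commutative `ℚ`-algebra `R`. -/
noncomputable def expS {R : Type*} [CommRing R] [Algebra ℚ R] (c : R) : PowerSeries R :=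
  PowerSeries.rescale c (PowerSeries.exp R)

/-- The formal power series `Li_k(1 - e^{-t})` over `ℂ`, where
`Li_k(z) = ∑_{m ≥ 1} z^m / m^k` is the `k`-th polylogarithm.  Since `1 - e^{-t}`
has order `1`, the coefficient of `t^n` only involves the terms with `1 ≤ m ≤ n`. -/
noncomputable def Lik (k : ℤ) : PowerSeries ℂ :=
  PowerSeries.mk fun n => ∑ m ∈ Finset.Icc 1 n,
    ((m : ℂ) ^ k)⁻¹ * PowerSeries.coeff n ((1 - expS (-1 : ℂ)) ^ m)

/-- The exponential generating function `∑_n p n · t^n / n!` of a sequence of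
complex polynomials. -/
noncomputable def egf (p : ℕ → Polynomial ℂ) : PowerSeries (Polynomial ℂ) :=
  PowerSeries.mk fun n => ((n.factorial : ℂ))⁻¹ • p n

noncomputable def Gser (k : ℤ) : PowerSeries ℂ :=
  PowerSeries.mk fun p => ∑ m ∈ Finset.range (p+1),
    (((m:ℂ)+1)^k)⁻¹ * PowerSeries.coeff p ((1 - expS (-1:ℂ))^m)

section lemmas
lemma coeff_expS {R : Type*} [CommRing R] [Algebra ℚ R] (c : R) (n : ℕ) :
    coeff n (expS c) = c ^ n * algebraMap ℚ R (1 / n.factorial) := by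
  simp [expS, coeff_rescale, coeff_exp]

lemma constantCoeff_expS {R : Type*} [CommRing R] [Algebra ℚ R] (c : R) :
    constantCoeff (expS c) = 1 := by
  rw [expS, ← coeff_zero_eq_constantCoeff_apply, coeff_rescale]
  simp [coeff_exp]

lemma coeff_one_expS {R : Type*} [CommRing R] [Algebra ℚ R] (c : R) :
    coeff 1 (expS c) = c := by
  rw [coeff_expS]; simp

lemma map_expS {R S : Type*} [CommRing R] [Algebra ℚ R] [CommRing S] [Algebra ℚ S]
    (f : R →+* S) (c : R) : PowerSeries.map f (expS c) = expS (f c) := by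
  ext n
  simp [coeff_expS, RingHom.map_rat_algebraMap]

lemma expS_zero {R : Type*} [CommRing R] [Algebra ℚ R] : expS (0 : R) = 1 := by
  rw [expS, rescale_zero]
  simp [constantCoeff_exp]

lemma expS_C_ne_one (c : ℂ) (hc : c ≠ 0) : expS (Polynomial.C c) - 1 ≠ 0 := by
  intro h
  have := congrArg (coeff 1) h
  rw [map_sub, coeff_one_expS, map_zero] at this
  simp only [coeff_one, if_neg one_ne_zero, sub_zero] at this
  exact hc (by simpa using congrArg (Polynomial.coeff · 0) this)

lemma one_sub_expS_neg_one_ne_zero : (1 : PowerSeries (Polynomial ℂ)) - expS (-1) ≠ 0 := by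
  intro h
  have := congrArg (coeff 1) h
  rw [map_zero, map_sub, coeff_one_expS] at this
  simp [coeff_one] at this

lemma coeff_pow_eq_zero' {R : Type*} [CommRing R] {f : PowerSeries R}
    (hf : constantCoeff f = 0) {p m : ℕ} (h : p < m) : coeff p (f ^ m) = 0 := by
  have h1 : (X : PowerSeries R) ∣ f := X_dvd_iff.mpr hf
  exact (X_pow_dvd_iff.mp (pow_dvd_pow_of_dvd h1 m)) p h

lemma Lik_eq (k : ℤ) : Lik k = (1 - expS (-1:ℂ)) * Gser k := by
  ext p
  set P : PowerSeries ℂ := 1 - expS (-1:ℂ) with hPdef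
  have hP0 : constantCoeff P = 0 := by
    rw [hPdef, map_sub, map_one, constantCoeff_expS, sub_self]
  rw [Lik, coeff_mk, coeff_mul, Finset.Nat.sum_antidiagonal_eq_sum_range_succ_mk]
  have step1 : ∀ i ∈ Finset.range (p+1), coeff i P * coeff (p - i) (Gser k)
      = ∑ m ∈ Finset.range (p+1),
          (((m:ℂ)+1)^k)⁻¹ * (coeff i P * coeff (p-i) (P^m)) := by
    intro i hi
    rw [Gser, coeff_mk, Finset.mul_sum]
    rw [Finset.sum_subset (Finset.range_subset_range.mpr (by
        simp only [Finset.mem_range] at hi; omega : p - i + 1 ≤ p + 1))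
      (fun m hm hnm => by
        have : p - i < m := by
          simp only [Finset.mem_range, not_lt] at hm hnm; omega
        rw [coeff_pow_eq_zero' hP0 this, mul_zero, mul_zero])]
    exact Finset.sum_congr rfl (fun m _ => by ring)
  rw [Finset.sum_congr rfl step1, Finset.sum_comm]
  have step2 : ∀ m ∈ Finset.range (p+1),
      ∑ i ∈ Finset.range (p+1), (((m:ℂ)+1)^k)⁻¹ * (coeff i P * coeff (p-i) (P^m))
      = (((m:ℂ)+1)^k)⁻¹ * coeff p (P^(m+1)) := by
    intro m _
    rw [← Finset.mul_sum, pow_succ' P m, coeff_mul,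
      Finset.Nat.sum_antidiagonal_eq_sum_range_succ_mk]
  rw [Finset.sum_congr rfl step2, Finset.sum_range_succ,
    coeff_pow_eq_zero' hP0 (Nat.lt_succ_self p), mul_zero, add_zero,
    ← Finset.Ico_add_one_right_eq_Icc, Finset.sum_Ico_eq_sum_range]
  exact Finset.sum_congr rfl (fun i _ => by rw [hPdef]; push_cast; ring_nf)

lemma coeff_P (S2 : ℕ → ℕ → ℂ)
    (hS2 : ∀ m, (PowerSeries.exp ℂ - 1) ^ m
        = (m.factorial : ℂ) • PowerSeries.mk (fun l => S2 l m / (l.factorial : ℂ)))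
    (p m : ℕ) :
    coeff p ((1 - expS (-1 : ℂ)) ^ m)
      = (-1:ℂ)^(p+m) * m.factorial * S2 p m / p.factorial := by
  have h1 : (1 - expS (-1 : ℂ)) = -1 * rescale (-1 : ℂ) (PowerSeries.exp ℂ - 1) := by
    rw [map_sub, map_one, expS, neg_one_mul, neg_sub]
  rw [h1, mul_pow, ← map_pow, hS2 m]
  have h2 : ((-1 : PowerSeries ℂ)) ^ m = C ((-1)^m) := by
    rw [map_pow, map_neg, map_one]
  have h3 : rescale (-1:ℂ) (C (m.factorial:ℂ)) = C (m.factorial:ℂ) := by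
    ext i; rw [coeff_rescale, coeff_C]; split_ifs with h <;> simp [h]
  rw [h2, coeff_C_mul, smul_eq_C_mul, map_mul, h3, coeff_C_mul, coeff_rescale, coeff_mk]
  ring

lemma binom_fact (n l s : ℕ) (h : l + s ≤ n) :
    (n.factorial : ℂ) * ((l.factorial : ℂ))⁻¹ * ((s.factorial : ℂ))⁻¹
        * (((n - l - s).factorial : ℂ))⁻¹
      = (n.choose (l+s) : ℂ) * ((l+s).choose l : ℂ) := by
  rw [Nat.cast_choose ℂ h, Nat.cast_choose ℂ (Nat.le_add_right l s),
      show n - (l+s) = n - l - s from by omega, Nat.add_sub_cancel_left]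
  have h1 : (((l+s)).factorial : ℂ) ≠ 0 := Nat.cast_ne_zero.mpr (Nat.factorial_ne_zero _)
  have h2 : ((l).factorial : ℂ) ≠ 0 := Nat.cast_ne_zero.mpr (Nat.factorial_ne_zero _)
  have h3 : ((s).factorial : ℂ) ≠ 0 := Nat.cast_ne_zero.mpr (Nat.factorial_ne_zero _)
  have h4 : (((n-l-s)).factorial : ℂ) ≠ 0 := Nat.cast_ne_zero.mpr (Nat.factorial_ne_zero _)
  field_simp
end lemmas

theorem stmt3 (r : ℕ) (hr : 0 < r) (k : ℤ) (a : Fin r → ℂ) (ha : ∀ j, a j ≠ 0)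
    (S Bp : ℕ → Polynomial ℂ) (S2 : ℕ → ℕ → ℂ)
    -- `S n` is the mixed-type polynomial `S_n^{(r,k)}(x|a_1,…,a_r)`:
    (hS : (PowerSeries.X : PowerSeries (Polynomial ℂ)) ^ r
        * PowerSeries.map Polynomial.C (Lik k) * expS Polynomial.X
        = (∏ j, (expS (Polynomial.C (a j)) - 1)) * (1 - expS (-1 : Polynomial ℂ)) * egf S)
    -- `Bp n` is the Barnes' multiple Bernoulli polynomial `B_n(x|a_1,…,a_r)`:
    (hB : (PowerSeries.X : PowerSeries (Polynomial ℂ)) ^ r * expS Polynomial.X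
        = (∏ j, (expS (Polynomial.C (a j)) - 1)) * egf Bp)
    -- `S2 l m` is the Stirling number of the second kind, defined by
    -- `(e^t - 1)^m = m! ∑_{l ≥ m} S2(l,m) t^l / l!`:
    (hS2 : ∀ m, (PowerSeries.exp ℂ - 1) ^ m
        = (m.factorial : ℂ) • PowerSeries.mk (fun l => S2 l m / (l.factorial : ℂ)))
    (n : ℕ) :
    S n = ∑ l ∈ Finset.range (n + 1),
      Polynomial.C (∑ j ∈ Finset.Icc l n, ∑ m ∈ Finset.range (n - j + 1),
          (-1 : ℂ) ^ (n - m - j) * (n.choose j : ℂ) * (j.choose l : ℂ)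
            * (m.factorial : ℂ) * (((m : ℂ) + 1) ^ k)⁻¹ * S2 (n - j) m
            * (Bp (j - l)).eval 0)
        * Polynomial.X ^ l := by
  set A : PowerSeries (Polynomial ℂ) := ∏ j, (expS (Polynomial.C (a j)) - 1) with hAdef
  have hA : A ≠ 0 := by
    rw [hAdef]
    exact Finset.prod_ne_zero_iff.mpr fun j _ => expS_C_ne_one (a j) (ha j)
  have hE := one_sub_expS_neg_one_ne_zero
  -- Step B : egf S = map C (Gser k) * egf Bp
  have key1 : egf S = PowerSeries.map Polynomial.C (Gser k) * egf Bp := by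
    apply mul_left_cancel₀ (mul_ne_zero hA hE)
    rw [← mul_assoc, ← hS]
    have h1 : PowerSeries.map Polynomial.C (Lik k)
        = (1 - expS (-1 : Polynomial ℂ)) * PowerSeries.map Polynomial.C (Gser k) := by
      rw [Lik_eq, map_mul, map_sub, map_one, map_expS]
      simp
    rw [h1]
    linear_combination ((1 - expS (-1 : Polynomial ℂ))
      * PowerSeries.map Polynomial.C (Gser k)) * hB
  -- Step C : egf Bp = map C B0 * expS X
  set B0 : PowerSeries ℂ :=
    PowerSeries.mk (fun q => ((q.factorial : ℂ))⁻¹ * (Bp q).eval 0) with hB0def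
  have key2 : egf Bp = PowerSeries.map Polynomial.C B0 * expS Polynomial.X := by
    apply mul_left_cancel₀ hA
    rw [← hB]
    have h0 := congrArg (PowerSeries.map (Polynomial.evalRingHom (0:ℂ))) hB
    rw [map_mul, map_mul, map_pow, PowerSeries.map_X, map_expS] at h0
    simp only [Polynomial.coe_evalRingHom, Polynomial.eval_X, expS_zero, mul_one] at h0
    have hmA : PowerSeries.map (Polynomial.evalRingHom (0:ℂ)) A
        = ∏ j, (expS (a j) - 1) := by
      rw [hAdef, map_prod]
      refine Finset.prod_congr rfl fun j _ => ?_
      rw [map_sub, map_one, map_expS]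
      simp
    have hmB : PowerSeries.map (Polynomial.evalRingHom (0:ℂ)) (egf Bp) = B0 := by
      ext q
      rw [hB0def, coeff_map, coeff_mk, egf, coeff_mk]
      simp [Polynomial.eval_smul, smul_eq_mul]
    rw [hmA, hmB] at h0
    -- h0 : X ^ r = (∏ j, (expS (a j) - 1)) * B0
    have hC : (X : PowerSeries (Polynomial ℂ))^r = A * PowerSeries.map Polynomial.C B0 := by
      have h2 := congrArg (PowerSeries.map (Polynomial.C : ℂ →+* Polynomial ℂ)) h0
      rw [map_pow, PowerSeries.map_X, map_mul, map_prod] at h2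
      rw [h2, hAdef]
      congr 1
      refine Finset.prod_congr rfl fun j _ => ?_
      rw [map_sub, map_one, map_expS]
    rw [hC]; ring
  have key3 : egf S = PowerSeries.map Polynomial.C (Gser k * B0) * expS Polynomial.X := by
    rw [key1, key2, map_mul]; ring
  -- Step D : coefficient extraction
  have main : ∀ l, l ≤ n →
      (n.factorial : ℂ) * coeff (n - l) (Gser k * B0) * ((l.factorial : ℂ))⁻¹
        = ∑ j ∈ Finset.Icc l n, ∑ m ∈ Finset.range (n - j + 1),
            (-1 : ℂ) ^ (n - m - j) * (n.choose j : ℂ) * (j.choose l : ℂ)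
              * (m.factorial : ℂ) * (((m : ℂ) + 1) ^ k)⁻¹ * S2 (n - j) m
              * (Bp (j - l)).eval 0 := by
    intro l hl
    rw [coeff_mul, Finset.Nat.sum_antidiagonal_eq_sum_range_succ_mk,
      ← Finset.sum_range_reflect, ← Finset.Ico_add_one_right_eq_Icc, Finset.sum_Ico_eq_sum_range,
      show n + 1 - l = n - l + 1 from by omega,
      Finset.mul_sum, Finset.sum_mul]
    refine Finset.sum_congr rfl fun s hs => ?_
    simp only [Finset.mem_range] at hs
    have hs' : s ≤ n - l := by omega
    simp only [Nat.succ_sub_one]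
    rw [show n - l - (n - l - s) = s from by omega,
        show n - (l + s) = n - l - s from by omega,
        show l + s - l = s from by omega]
    rw [hB0def, coeff_mk, Gser, coeff_mk, Finset.sum_mul, Finset.mul_sum, Finset.sum_mul]
    refine Finset.sum_congr rfl fun m hm => ?_
    simp only [Finset.mem_range] at hm
    rw [coeff_P S2 hS2]
    rw [show (n - l - s) + m = (n - l - s - m) + 2 * m from by omega,
        pow_add, pow_mul, neg_one_sq, one_pow, mul_one]
    rw [show n - m - (l + s) = n - l - s - m from by omega]
    have key := binom_fact n l s (by omega)
    linear_combination ((-1:ℂ)^(n - l - s - m) * (((m:ℂ)+1)^k)⁻¹ * (m.factorial:ℂ)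
      * S2 (n - l - s) m * (Bp s).eval 0) * key
  have hfact : ((n.factorial : ℂ)) ≠ 0 := Nat.cast_ne_zero.mpr n.factorial_ne_zero
  have hSn : S n = (n.factorial : ℂ) • coeff n (egf S) := by
    simp only [egf, coeff_mk, smul_smul, mul_inv_cancel₀ hfact, one_smul]
  rw [hSn, key3, coeff_mul, Finset.Nat.sum_antidiagonal_eq_sum_range_succ_mk,
    Finset.smul_sum, ← Finset.sum_range_reflect]
  simp only [Nat.succ_sub_one]
  refine Finset.sum_congr rfl fun i hi => ?_
  simp only [Finset.mem_range] at hi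
  have hin : i ≤ n := by omega
  rw [coeff_map, coeff_expS, show n - (n - i) = i from by omega]
  have halg : algebraMap ℚ (Polynomial ℂ) (1 / i.factorial)
      = Polynomial.C (((i.factorial : ℂ))⁻¹) := by
    rw [Polynomial.algebraMap_apply]
    congr 1
    rw [eq_ratCast (algebraMap ℚ ℂ)]
    push_cast
    ring
  rw [halg, Polynomial.smul_eq_C_mul, ← main i hin]
  simp only [map_mul]
  ring
end

section
/- For every nonnegative integer n, Σ_{m=0}^n C(n+1,m) (−1)^{n−m} S_m^{(r,k)}(a_1,…,a_r) = Σ_{l=0}^n Σ_{m=0}^l (−1)^{l−m} C(l,m) C(n+1,l+1) B_m^{(k−1)} B_{n−l}(a_1,…,a_r), where B_m^{(k−1)} = B_m^{(k−1)}(0) are the poly-Bernoulli numbers of index k−1. -/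
open PowerSeries Finset

namespace Stmt8Aux

noncomputable def ε : Polynomial ℂ →+* ℂ := Polynomial.evalRingHom 0

noncomputable def E : PowerSeries ℂ := expS (-1 : ℂ)

noncomputable def Dd : PowerSeries ℂ := 1 - E

lemma ratMap {R : Type*} [CommRing R] [Algebra ℚ R] (f : R →+* ℂ) (q : ℚ) :
    f (algebraMap ℚ R q) = algebraMap ℚ ℂ q := by
  rw [show f (algebraMap ℚ R q) = (f.comp (algebraMap ℚ R)) q from rfl,
    eq_ratCast (f.comp (algebraMap ℚ R)), eq_ratCast (algebraMap ℚ ℂ)]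

lemma coeff_expS {R : Type*} [CommRing R] [Algebra ℚ R] (c : R) (n : ℕ) :
    PowerSeries.coeff n (expS c) = c ^ n * algebraMap ℚ R (1 / n.factorial) := by
  simp [expS, coeff_rescale, coeff_exp]

lemma algebraMap_fact (n : ℕ) :
    algebraMap ℚ ℂ (1 / n.factorial) = ((n.factorial : ℂ))⁻¹ := by
  rw [eq_ratCast]; push_cast; simp

lemma coeff_E (n : ℕ) : PowerSeries.coeff n E = (-1) ^ n * ((n.factorial : ℂ))⁻¹ := by
  rw [E, coeff_expS, algebraMap_fact]

lemma coeff_Dd (n : ℕ) : PowerSeries.coeff n Dd =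
    (if n = 0 then 1 else 0) - (-1) ^ n * ((n.factorial : ℂ))⁻¹ := by
  rw [Dd, map_sub, coeff_E, coeff_one]

lemma constantCoeff_Dd : PowerSeries.constantCoeff Dd = 0 := by
  rw [← coeff_zero_eq_constantCoeff_apply, coeff_Dd]; norm_num

lemma Dd_ne_zero : Dd ≠ 0 := by
  intro h
  have h1 := coeff_Dd 1
  rw [h, map_zero] at h1
  norm_num [Nat.factorial] at h1

lemma coeff_Dd_pow {n m : ℕ} (h : n < m) : PowerSeries.coeff n (Dd ^ m) = 0 := by
  have hdvd : (X : PowerSeries ℂ) ^ m ∣ Dd ^ m :=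
    pow_dvd_pow_of_dvd (PowerSeries.X_dvd_iff.2 constantCoeff_Dd) m
  exact (PowerSeries.X_pow_dvd_iff.1 hdvd) n h

noncomputable def T (k : ℤ) (M : ℕ) : PowerSeries ℂ :=
  ∑ m ∈ Finset.Icc 1 M, ((m : ℂ) ^ k)⁻¹ • Dd ^ m

lemma coeff_T (k : ℤ) (M n : ℕ) : PowerSeries.coeff n (T k M)
    = ∑ m ∈ Finset.Icc 1 M, ((m : ℂ) ^ k)⁻¹ * PowerSeries.coeff n (Dd ^ m) := by
  simp [T]

lemma coeff_Lik (k : ℤ) (n : ℕ) : PowerSeries.coeff n (Lik k)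
    = ∑ m ∈ Finset.Icc 1 n, ((m : ℂ) ^ k)⁻¹ * PowerSeries.coeff n (Dd ^ m) := by
  simp only [Lik, coeff_mk, Dd, E]

lemma coeff_Lik_T {k : ℤ} {M n : ℕ} (h : n ≤ M) :
    PowerSeries.coeff n (Lik k) = PowerSeries.coeff n (T k M) := by
  rw [coeff_Lik, coeff_T]
  apply Finset.sum_subset (Finset.Icc_subset_Icc_right h)
  intro m hm hnm
  have hlt : n < m := by
    simp only [Finset.mem_Icc] at hm hnm; omega
  rw [coeff_Dd_pow hlt, mul_zero]

lemma deriv_Dd : d⁄dX ℂ Dd = E := by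
  ext n
  have h1 : ((n : ℂ) + 1) ≠ 0 := Nat.cast_add_one_ne_zero n
  have h2 : ((n.factorial : ℂ)) ≠ 0 := Nat.cast_ne_zero.2 n.factorial_ne_zero
  rw [coeff_derivative, coeff_Dd, coeff_E]
  simp only [Nat.succ_ne_zero, if_false, Nat.factorial_succ, pow_succ]
  push_cast
  field_simp
  ring


lemma keyT (k : ℤ) (M : ℕ) : Dd * (d⁄dX ℂ) (T k M) = E * T (k - 1) M := by
  rw [T, map_sum, Finset.mul_sum, T, Finset.mul_sum]
  apply Finset.sum_congr rfl
  intro m hm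
  have hm1 : 1 ≤ m := (Finset.mem_Icc.1 hm).1
  have hmC : (m : ℂ) ≠ 0 := Nat.cast_ne_zero.2 (by omega)
  have hz : ((m : ℂ) ^ (k - 1))⁻¹ = ((m : ℂ) ^ k)⁻¹ * m := by
    rw [zpow_sub₀ hmC, zpow_one, div_eq_mul_inv, mul_inv, inv_inv]
  have hpow : Dd ^ m = Dd * Dd ^ (m - 1) := by
    conv_lhs => rw [show m = m - 1 + 1 by omega]
    rw [pow_succ']
  rw [Derivation.map_smul, Derivation.leibniz_pow, deriv_Dd, hz]
  simp only [smul_eq_mul, nsmul_eq_mul, PowerSeries.smul_eq_C_mul, map_mul, map_natCast]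
  rw [hpow]
  ring

lemma keyL (k : ℤ) : Dd * (d⁄dX ℂ) (Lik k) = E * Lik (k - 1) := by
  ext n
  have h1 : PowerSeries.coeff n (Dd * (d⁄dX ℂ) (Lik k))
      = PowerSeries.coeff n (Dd * (d⁄dX ℂ) (T k (n + 1))) := by
    rw [coeff_mul, coeff_mul]
    refine Finset.sum_congr rfl fun p hp => ?_
    have hp2 : p.2 ≤ n := by
      have := Finset.HasAntidiagonal.mem_antidiagonal.1 hp; omega
    rw [coeff_derivative, coeff_derivative, coeff_Lik_T (by omega : p.2 + 1 ≤ n + 1)]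
  have h2 : PowerSeries.coeff n (E * Lik (k - 1))
      = PowerSeries.coeff n (E * T (k - 1) (n + 1)) := by
    rw [coeff_mul, coeff_mul]
    refine Finset.sum_congr rfl fun p hp => ?_
    have hp2 : p.2 ≤ n := by
      have := Finset.HasAntidiagonal.mem_antidiagonal.1 hp; omega
    rw [coeff_Lik_T (by omega : p.2 ≤ n + 1)]
  rw [h1, h2, keyT]


lemma ε_smul (c : ℂ) (p : Polynomial ℂ) : ε (c • p) = c * ε p := by
  simp [ε, Polynomial.eval_smul]

lemma map_expS (c : Polynomial ℂ) :
    PowerSeries.map ε (expS c) = expS (ε c) := by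
  ext n
  rw [PowerSeries.coeff_map, coeff_expS, coeff_expS, map_mul, map_pow, ratMap]

lemma expS_zero : expS (0 : ℂ) = 1 := by
  rw [expS, rescale_zero]
  simp

lemma map_egf (p : ℕ → Polynomial ℂ) : PowerSeries.map ε (egf p)
    = PowerSeries.mk fun n => ((n.factorial : ℂ))⁻¹ * (p n).eval 0 := by
  ext n
  rw [PowerSeries.coeff_map, egf, coeff_mk, coeff_mk, ε_smul]
  rfl

lemma map_Lik (k : ℤ) :
    PowerSeries.map ε (PowerSeries.map Polynomial.C (Lik k)) = Lik k := by
  ext n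
  rw [PowerSeries.coeff_map, PowerSeries.coeff_map]
  simp [ε]

lemma ε_X : ε Polynomial.X = 0 := by simp [ε]

lemma ε_C (z : ℂ) : ε (Polynomial.C z) = z := by simp [ε]

end Stmt8Aux

open Stmt8Aux

theorem stmt8 (r : ℕ) (hr : 0 < r) (k : ℤ) (a : Fin r → ℂ) (ha : ∀ j, a j ≠ 0)
    (S Bp PB' : ℕ → Polynomial ℂ)
    -- `S n` is the mixed-type polynomial `S_n^{(r,k)}(x|a_1,…,a_r)`:
    (hS : (PowerSeries.X : PowerSeries (Polynomial ℂ)) ^ r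
        * PowerSeries.map Polynomial.C (Lik k) * expS Polynomial.X
        = (∏ j, (expS (Polynomial.C (a j)) - 1)) * (1 - expS (-1 : Polynomial ℂ)) * egf S)
    -- `Bp n` is the Barnes' multiple Bernoulli polynomial `B_n(x|a_1,…,a_r)`:
    (hB : (PowerSeries.X : PowerSeries (Polynomial ℂ)) ^ r * expS Polynomial.X
        = (∏ j, (expS (Polynomial.C (a j)) - 1)) * egf Bp)
    -- `PB' n` is the poly-Bernoulli polynomial `B_n^{(k-1)}(x)` of index `k - 1`:
    (hPB' : PowerSeries.map Polynomial.C (Lik (k - 1)) * expS Polynomial.X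
        = (1 - expS (-1 : Polynomial ℂ)) * egf PB')
    (n : ℕ) :
    ∑ m ∈ Finset.range (n + 1),
        ((n + 1).choose m : ℂ) * (-1 : ℂ) ^ (n - m) * (S m).eval 0
      = ∑ l ∈ Finset.range (n + 1), ∑ m ∈ Finset.range (l + 1),
          (-1 : ℂ) ^ (l - m) * (l.choose m : ℂ) * ((n + 1).choose (l + 1) : ℂ)
            * (PB' m).eval 0 * (Bp (n - l)).eval 0 := by
  classical
  have hS' := congrArg (PowerSeries.map ε) hS
  have hB' := congrArg (PowerSeries.map ε) hB
  have hP' := congrArg (PowerSeries.map ε) hPB'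
  simp only [map_mul, map_pow, map_sub, map_one, map_prod, map_neg, PowerSeries.map_X,
    map_Lik, map_expS, map_egf, ε_X, ε_C, expS_zero, mul_one] at hS' hB' hP'
  have hDd : (1 - expS (-1 : ℂ)) = Dd := rfl
  rw [hDd] at hS' hP'
  set P : PowerSeries ℂ := ∏ j, (expS (a j) - 1) with hPdef
  set ss : PowerSeries ℂ := PowerSeries.mk fun m => ((m.factorial : ℂ))⁻¹ * (S m).eval 0
    with hssdef
  set sb : PowerSeries ℂ := PowerSeries.mk fun m => ((m.factorial : ℂ))⁻¹ * (Bp m).eval 0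
    with hsbdef
  set sp : PowerSeries ℂ := PowerSeries.mk fun m => ((m.factorial : ℂ))⁻¹ * (PB' m).eval 0
    with hspdef
  have hXr : (X : PowerSeries ℂ) ^ r ≠ 0 := pow_ne_zero _ PowerSeries.X_ne_zero
  have hPne : P ≠ 0 := by
    intro h0
    exact hXr (by rw [hB', h0, zero_mul])
  have hDs : Dd * ss = Lik k * sb := by
    apply mul_left_cancel₀ hPne
    calc P * (Dd * ss) = X ^ r * Lik k := by rw [hS']; ring
      _ = (P * sb) * Lik k := by rw [← hB']
      _ = P * (Lik k * sb) := by ring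
  have hdL : (d⁄dX ℂ) (Lik k) = E * sp := by
    apply mul_left_cancel₀ Dd_ne_zero
    calc Dd * ((d⁄dX ℂ) (Lik k)) = E * Lik (k - 1) := keyL k
      _ = E * (Dd * sp) := by rw [hP']
      _ = Dd * (E * sp) := by ring
  have fne : ∀ m : ℕ, ((m.factorial : ℂ)) ≠ 0 := fun m => Nat.cast_ne_zero.2 m.factorial_ne_zero
  have hL0 : PowerSeries.coeff 0 (Lik k) = 0 := by
    rw [coeff_Lik]; simp
  have hLl : ∀ l : ℕ, PowerSeries.coeff (l + 1) (Lik k)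
      = ((l : ℂ) + 1)⁻¹ * PowerSeries.coeff l (E * sp) := by
    intro l
    have hone : ((l : ℂ) + 1) ≠ 0 := Nat.cast_add_one_ne_zero l
    have hd := coeff_derivative (Lik k) l
    rw [hdL] at hd
    rw [hd]
    field_simp
  have hLHS : (((n + 1).factorial : ℂ)) * PowerSeries.coeff (n + 1) (Dd * ss)
      = ∑ m ∈ Finset.range (n + 1),
        ((n + 1).choose m : ℂ) * (-1 : ℂ) ^ (n - m) * (S m).eval 0 := by
    have hDd0 : PowerSeries.coeff 0 Dd = 0 := by rw [coeff_Dd]; norm_num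
    calc (((n + 1).factorial : ℂ)) * PowerSeries.coeff (n + 1) (Dd * ss)
        = ∑ i ∈ Finset.range (n + 1 + 1), ((n + 1).factorial : ℂ)
            * (PowerSeries.coeff i Dd * PowerSeries.coeff (n + 1 - i) ss) := by
          rw [coeff_mul, Finset.Nat.sum_antidiagonal_eq_sum_range_succ_mk, Finset.mul_sum]
      _ = ∑ i ∈ Finset.range (n + 1), ((n + 1).factorial : ℂ)
            * (PowerSeries.coeff (i + 1) Dd * PowerSeries.coeff (n - i) ss) := by
          rw [Finset.sum_range_succ', hDd0]
          simp only [zero_mul, mul_zero, add_zero]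
          refine Finset.sum_congr rfl fun i hi => ?_
          rw [show n + 1 - (i + 1) = n - i by omega]
      _ = ∑ i ∈ Finset.range (n + 1),
            (((n + 1).choose (n - i) : ℂ) * (-1 : ℂ) ^ (n - (n - i)) * (S (n - i)).eval 0) := by
          refine Finset.sum_congr rfl fun j hj => ?_
          have hjn : j ≤ n := Nat.lt_succ_iff.1 (Finset.mem_range.1 hj)
          rw [show n - (n - j) = j by omega]
          rw [hssdef, coeff_mk, coeff_Dd]
          rw [Nat.cast_choose ℂ (show n - j ≤ n + 1 by omega),
            show n + 1 - (n - j) = j + 1 by omega]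
          simp only [Nat.succ_ne_zero, if_false, zero_sub]
          have f1 := fne (n - j)
          have f2 := fne (j + 1)
          have f3 := fne (n + 1)
          field_simp
          ring
      _ = ∑ m ∈ Finset.range (n + 1),
            ((n + 1).choose m : ℂ) * (-1 : ℂ) ^ (n - m) * (S m).eval 0 := by
          have hrefl := Finset.sum_range_reflect
            (fun m => ((n + 1).choose m : ℂ) * (-1 : ℂ) ^ (n - m) * (S m).eval 0) (n + 1)
          simpa using hrefl
  have hRHS : (((n + 1).factorial : ℂ)) * PowerSeries.coeff (n + 1) (Lik k * sb)
      = ∑ l ∈ Finset.range (n + 1), ∑ m ∈ Finset.range (l + 1),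
          (-1 : ℂ) ^ (l - m) * (l.choose m : ℂ) * ((n + 1).choose (l + 1) : ℂ)
            * (PB' m).eval 0 * (Bp (n - l)).eval 0 := by
    calc (((n + 1).factorial : ℂ)) * PowerSeries.coeff (n + 1) (Lik k * sb)
        = ∑ i ∈ Finset.range (n + 1 + 1), ((n + 1).factorial : ℂ)
            * (PowerSeries.coeff i (Lik k) * PowerSeries.coeff (n + 1 - i) sb) := by
          rw [coeff_mul, Finset.Nat.sum_antidiagonal_eq_sum_range_succ_mk, Finset.mul_sum]
      _ = ∑ l ∈ Finset.range (n + 1), ((n + 1).factorial : ℂ)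
            * (PowerSeries.coeff (l + 1) (Lik k) * PowerSeries.coeff (n - l) sb) := by
          rw [Finset.sum_range_succ', hL0]
          simp only [zero_mul, mul_zero, add_zero]
          refine Finset.sum_congr rfl fun l hl => ?_
          rw [show n + 1 - (l + 1) = n - l by omega]
      _ = ∑ l ∈ Finset.range (n + 1), ∑ m ∈ Finset.range (l + 1),
          (-1 : ℂ) ^ (l - m) * (l.choose m : ℂ) * ((n + 1).choose (l + 1) : ℂ)
            * (PB' m).eval 0 * (Bp (n - l)).eval 0 := by
          refine Finset.sum_congr rfl fun l hl => ?_
          have hln : l ≤ n := Nat.lt_succ_iff.1 (Finset.mem_range.1 hl)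
          rw [hLl l, coeff_mul, Finset.Nat.sum_antidiagonal_eq_sum_range_succ_mk]
          simp only [Finset.mul_sum, Finset.sum_mul]
          calc ∑ i ∈ Finset.range (l + 1), ((n + 1).factorial : ℂ)
                * (((l : ℂ) + 1)⁻¹ * (PowerSeries.coeff i E * PowerSeries.coeff (l - i) sp)
                    * PowerSeries.coeff (n - l) sb)
              = ∑ i ∈ Finset.range (l + 1),
                  ((-1 : ℂ) ^ (l - (l - i)) * (l.choose (l - i) : ℂ)
                    * ((n + 1).choose (l + 1) : ℂ)
                    * (PB' (l - i)).eval 0 * (Bp (n - l)).eval 0) := by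
                refine Finset.sum_congr rfl fun i hi => ?_
                have hil : i ≤ l := Nat.lt_succ_iff.1 (Finset.mem_range.1 hi)
                rw [coeff_E, hspdef, coeff_mk, hsbdef, coeff_mk]
                rw [Nat.cast_choose ℂ (show l - i ≤ l by omega),
                  Nat.cast_choose ℂ (show l + 1 ≤ n + 1 by omega),
                  show n + 1 - (l + 1) = n - l by omega,
                  show l - (l - i) = i by omega, Nat.factorial_succ l]
                have f1 := fne i
                have f2 := fne (l - i)
                have f3 := fne (n - l)
                have f4 := fne l
                have f5 := fne (n + 1)
                have f6 : ((l : ℂ) + 1) ≠ 0 := Nat.cast_add_one_ne_zero l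
                push_cast
                field_simp
            _ = ∑ m ∈ Finset.range (l + 1),
                  (-1 : ℂ) ^ (l - m) * (l.choose m : ℂ) * ((n + 1).choose (l + 1) : ℂ)
                    * (PB' m).eval 0 * (Bp (n - l)).eval 0 := by
                have hrefl := Finset.sum_range_reflect
                  (fun m => (-1 : ℂ) ^ (l - m) * (l.choose m : ℂ)
                    * ((n + 1).choose (l + 1) : ℂ)
                    * (PB' m).eval 0 * (Bp (n - l)).eval 0) (l + 1)
                simpa using hrefl
  calc ∑ m ∈ Finset.range (n + 1),
        ((n + 1).choose m : ℂ) * (-1 : ℂ) ^ (n - m) * (S m).eval 0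
      = (((n + 1).factorial : ℂ)) * PowerSeries.coeff (n + 1) (Dd * ss) := hLHS.symm
    _ = (((n + 1).factorial : ℂ)) * PowerSeries.coeff (n + 1) (Lik k * sb) := by rw [hDs]
    _ = _ := hRHS
end

section
/- For every nonnegative integer n, every nonnegative integer s, and every λ ∈ ℂ with λ ≠ 1, S_n^{(r,k)}(x|a_1,…,a_r) = Σ_{m=0}^n ( (C(n,m)/(1−λ)^s) Σ_{j=0}^s C(s,j)(−λ)^{s−j} S_{n−m}^{(r,k)}(j|a_1,…,a_r) ) H_m^{(s)}(x|λ), as an identity of polynomials in x. -/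
open PowerSeries Finset

namespace Aux

lemma map_rescale {R S : Type*} [CommSemiring R] [CommSemiring S] (f : R →+* S) (a : R)
    (p : PowerSeries R) :
    PowerSeries.map f (PowerSeries.rescale a p) =
      PowerSeries.rescale (f a) (PowerSeries.map f p) := by
  ext n
  simp [PowerSeries.coeff_rescale, PowerSeries.coeff_map]

lemma map_exp (f : Polynomial ℂ →+* Polynomial ℂ) :
    PowerSeries.map f (PowerSeries.exp (Polynomial ℂ)) = PowerSeries.exp (Polynomial ℂ) := by
  ext n
  simp [PowerSeries.coeff_exp, PowerSeries.coeff_map, Polynomial.algebraMap_apply]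

lemma map_expS (f : Polynomial ℂ →+* Polynomial ℂ) (c : Polynomial ℂ) :
    PowerSeries.map f (expS c) = expS (f c) := by
  rw [expS, map_rescale, map_exp f, expS]

lemma coeff_one_expS (c : Polynomial ℂ) :
    PowerSeries.coeff 1 (expS c) = c := by
  simp [expS, PowerSeries.coeff_rescale, PowerSeries.coeff_exp, Polynomial.algebraMap_apply]

lemma expS_sub_one_ne_zero {c : Polynomial ℂ} (hc : c ≠ 0) : expS c - 1 ≠ 0 := by
  intro h
  apply hc
  have := congrArg (PowerSeries.coeff 1) h
  simpa [coeff_one_expS] using this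

lemma constantCoeff_expS (c : Polynomial ℂ) :
    PowerSeries.constantCoeff (expS c) = 1 := by
  simp [expS, ← PowerSeries.coeff_zero_eq_constantCoeff_apply, PowerSeries.coeff_rescale,
    PowerSeries.coeff_exp]

lemma expS_one_pow (j : ℕ) :
    (expS (1 : Polynomial ℂ)) ^ j = expS (Polynomial.C (j : ℂ)) := by
  rw [expS, PowerSeries.rescale_one]
  simp only [RingHom.id_apply]
  rw [PowerSeries.exp_pow_eq_rescale_exp, expS]
  norm_cast

lemma map_egf (x : ℂ) (p : ℕ → Polynomial ℂ) :
    PowerSeries.map (Polynomial.C.comp (Polynomial.evalRingHom x)) (egf p)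
      = egf (fun q => Polynomial.C ((p q).eval x)) := by
  ext q
  simp [egf, PowerSeries.coeff_map, Polynomial.smul_C, Algebra.smul_def]

lemma map_eval_mapC (x : ℂ) (p : PowerSeries ℂ) :
    PowerSeries.map (Polynomial.C.comp (Polynomial.evalRingHom x))
        (PowerSeries.map Polynomial.C p)
      = PowerSeries.map Polynomial.C p := by
  ext q
  simp [PowerSeries.coeff_map]

end Aux

theorem stmt11 (r : ℕ) (hr : 0 < r) (k : ℤ) (a : Fin r → ℂ) (ha : ∀ j, a j ≠ 0)
    (s : ℕ) (lam : ℂ) (hlam : lam ≠ 1)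
    (S H : ℕ → Polynomial ℂ)
    -- `S n` is the mixed-type polynomial `S_n^{(r,k)}(x|a_1,…,a_r)`:
    (hS : (PowerSeries.X : PowerSeries (Polynomial ℂ)) ^ r
        * PowerSeries.map Polynomial.C (Lik k) * expS Polynomial.X
        = (∏ j, (expS (Polynomial.C (a j)) - 1)) * (1 - expS (-1 : Polynomial ℂ)) * egf S)
    -- `H n` is the Frobenius-Euler polynomial `H_n^{(s)}(x|λ)` of order `s`, defined by
    -- `((1-λ)/(e^t-λ))^s e^{xt} = ∑_n H_n^{(s)}(x|λ) t^n/n!`: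
    (hH : PowerSeries.C (Polynomial.C ((1 - lam) ^ s)) * expS Polynomial.X
        = (expS (1 : Polynomial ℂ) - PowerSeries.C (Polynomial.C lam)) ^ s
          * egf H)
    (n : ℕ) :
    S n = ∑ m ∈ Finset.range (n + 1),
      Polynomial.C ((n.choose m : ℂ) / (1 - lam) ^ s
          * ∑ j ∈ Finset.range (s + 1),
              (s.choose j : ℂ) * (-lam) ^ (s - j) * (S (n - m)).eval (j : ℂ))
        * H m := by
  classical
  set A : PowerSeries (Polynomial ℂ) :=
    (∏ j, (expS (Polynomial.C (a j)) - 1)) * (1 - expS (-1 : Polynomial ℂ)) with hAdef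
  have h1lam : (1 : ℂ) - lam ≠ 0 := sub_ne_zero.mpr (Ne.symm hlam)
  have hpow : ((1 : ℂ) - lam) ^ s ≠ 0 := pow_ne_zero _ h1lam
  have hA : A ≠ 0 := by
    apply mul_ne_zero
    · exact Finset.prod_ne_zero_iff.mpr fun j _ =>
        Aux.expS_sub_one_ne_zero (by simpa using ha j)
    · intro h
      have := congrArg (PowerSeries.coeff 1) h
      simp [Aux.coeff_one_expS] at this
  have hB : (expS (1 : Polynomial ℂ) - PowerSeries.C (Polynomial.C lam)) ^ s
      ≠ 0 := by
    apply pow_ne_zero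
    intro h
    have h0 := congrArg (PowerSeries.constantCoeff) h
    rw [map_sub, Aux.constantCoeff_expS, PowerSeries.constantCoeff_C, map_zero,
      sub_eq_zero, ← Polynomial.C_1, Polynomial.C_inj] at h0
    exact hlam h0.symm
  have L1 : ∀ j : ℕ,
      (PowerSeries.X : PowerSeries (Polynomial ℂ)) ^ r
        * PowerSeries.map Polynomial.C (Lik k) * expS (Polynomial.C ((j : ℕ) : ℂ))
      = A * egf (fun q => Polynomial.C ((S q).eval ((j : ℕ) : ℂ))) := by
    intro j
    have h := congrArg
      (PowerSeries.map (Polynomial.C.comp (Polynomial.evalRingHom ((j : ℕ) : ℂ)))) hS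
    simp only [hAdef, map_mul, map_pow, map_sub, map_one, map_prod, map_neg,
      Aux.map_expS, Aux.map_eval_mapC, Aux.map_egf, PowerSeries.map_X,
      RingHom.coe_comp, Function.comp_apply, Polynomial.coe_evalRingHom,
      Polynomial.eval_C, Polynomial.eval_X, Polynomial.eval_one] at h
    rw [hAdef]
    exact h
  have hBin : (expS (1 : Polynomial ℂ) - PowerSeries.C (Polynomial.C lam)) ^ s
      = ∑ j ∈ Finset.range (s + 1),
          PowerSeries.C (Polynomial.C ((s.choose j : ℂ) * (-lam) ^ (s - j)))
            * expS (Polynomial.C ((j : ℕ) : ℂ)) := by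
    rw [sub_eq_add_neg, add_pow]
    refine Finset.sum_congr rfl fun j hj => ?_
    rw [Aux.expS_one_pow]
    have h1 : (-PowerSeries.C (Polynomial.C lam)) ^ (s - j)
        = PowerSeries.C (Polynomial.C ((-lam) ^ (s - j))) := by
      rw [← map_neg, ← map_neg, ← map_pow, ← map_pow]
    have hc : ((s.choose j : ℕ) : PowerSeries (Polynomial ℂ))
        = PowerSeries.C (Polynomial.C ((s.choose j : ℂ))) := by
      norm_cast
    rw [h1, hc, map_mul, map_mul]
    ring
  set cst : ℕ → ℂ := fun q => (((1 : ℂ) - lam) ^ s)⁻¹ *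
    ∑ j ∈ Finset.range (s + 1), (s.choose j : ℂ) * (-lam) ^ (s - j) * (S q).eval ((j : ℕ) : ℂ)
    with hcst
  set E : PowerSeries (Polynomial ℂ) :=
    PowerSeries.mk (fun q => ((q.factorial : ℂ))⁻¹ • Polynomial.C (cst q)) with hE
  have hEC : E * PowerSeries.C (Polynomial.C ((1 - lam) ^ s))
      = ∑ j ∈ Finset.range (s + 1),
          PowerSeries.C (Polynomial.C ((s.choose j : ℂ) * (-lam) ^ (s - j)))
            * egf (fun q => Polynomial.C ((S q).eval ((j : ℕ) : ℂ))) := by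
    ext q : 1
    have hq : ((q.factorial : ℂ))⁻¹ * cst q * (1 - lam) ^ s
        = ∑ j ∈ Finset.range (s + 1), (s.choose j : ℂ) * (-lam) ^ (s - j)
            * (((q.factorial : ℂ))⁻¹ * (S q).eval ((j : ℕ) : ℂ)) := by
      simp only [hcst]
      calc ((q.factorial : ℂ))⁻¹ * ((((1 : ℂ) - lam) ^ s)⁻¹ *
              ∑ j ∈ Finset.range (s + 1), (s.choose j : ℂ) * (-lam) ^ (s - j)
                * (S q).eval ((j : ℕ) : ℂ)) * (1 - lam) ^ s
          = (((1 : ℂ) - lam) ^ s * (((1 : ℂ) - lam) ^ s)⁻¹) *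
              (((q.factorial : ℂ))⁻¹ *
                ∑ j ∈ Finset.range (s + 1), (s.choose j : ℂ) * (-lam) ^ (s - j)
                  * (S q).eval ((j : ℕ) : ℂ)) := by ring
        _ = ((q.factorial : ℂ))⁻¹ *
              ∑ j ∈ Finset.range (s + 1), (s.choose j : ℂ) * (-lam) ^ (s - j)
                * (S q).eval ((j : ℕ) : ℂ) := by
            rw [mul_inv_cancel₀ hpow, one_mul]
        _ = _ := by
            rw [Finset.mul_sum]
            exact Finset.sum_congr rfl fun j _ => by ring
    rw [PowerSeries.coeff_mul_C, map_sum (PowerSeries.coeff q)]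
    simp only [hE, PowerSeries.coeff_mk, egf, PowerSeries.coeff_C_mul,
      Polynomial.smul_C, smul_eq_mul, ← Polynomial.C_mul]
    rw [← map_sum Polynomial.C, hq]
  have key : egf S = E * egf H := by
    apply mul_left_cancel₀ (mul_ne_zero hA hB)
    calc A * (expS (1 : Polynomial ℂ) - PowerSeries.C (Polynomial.C lam)) ^ s
          * egf S
        = (expS (1 : Polynomial ℂ) - PowerSeries.C (Polynomial.C lam)) ^ s
            * (A * egf S) := by ring
      _ = (∑ j ∈ Finset.range (s + 1),
            PowerSeries.C (Polynomial.C ((s.choose j : ℂ) * (-lam) ^ (s - j)))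
              * expS (Polynomial.C ((j : ℕ) : ℂ)))
            * ((PowerSeries.X : PowerSeries (Polynomial ℂ)) ^ r
              * PowerSeries.map Polynomial.C (Lik k) * expS Polynomial.X) := by
          rw [← hS, ← hBin]
      _ = ∑ j ∈ Finset.range (s + 1),
            PowerSeries.C (Polynomial.C ((s.choose j : ℂ) * (-lam) ^ (s - j)))
              * (((PowerSeries.X : PowerSeries (Polynomial ℂ)) ^ r
                * PowerSeries.map Polynomial.C (Lik k) * expS (Polynomial.C ((j : ℕ) : ℂ)))
                * expS Polynomial.X) := by
          rw [Finset.sum_mul]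
          refine Finset.sum_congr rfl fun j hj => ?_
          ring
      _ = ∑ j ∈ Finset.range (s + 1),
            PowerSeries.C (Polynomial.C ((s.choose j : ℂ) * (-lam) ^ (s - j)))
              * ((A * egf (fun q => Polynomial.C ((S q).eval ((j : ℕ) : ℂ))))
                * expS Polynomial.X) := by
          refine Finset.sum_congr rfl fun j hj => ?_
          rw [L1 j]
      _ = A * (∑ j ∈ Finset.range (s + 1),
            PowerSeries.C (Polynomial.C ((s.choose j : ℂ) * (-lam) ^ (s - j)))
              * egf (fun q => Polynomial.C ((S q).eval ((j : ℕ) : ℂ))))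
            * expS Polynomial.X := by
          rw [Finset.mul_sum, Finset.sum_mul]
          refine Finset.sum_congr rfl fun j hj => ?_
          ring
      _ = A * (E * PowerSeries.C (Polynomial.C ((1 - lam) ^ s)))
            * expS Polynomial.X := by rw [hEC]
      _ = A * E * (PowerSeries.C (Polynomial.C ((1 - lam) ^ s))
            * expS Polynomial.X) := by ring
      _ = A * E * ((expS (1 : Polynomial ℂ)
            - PowerSeries.C (Polynomial.C lam)) ^ s * egf H) := by rw [hH]
      _ = A * (expS (1 : Polynomial ℂ) - PowerSeries.C (Polynomial.C lam)) ^ s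
            * (E * egf H) := by ring
  -- extract coefficient n
  have hc := congrArg (PowerSeries.coeff n) key
  rw [PowerSeries.coeff_mul, Finset.Nat.sum_antidiagonal_eq_sum_range_succ_mk] at hc
  simp only [hE, PowerSeries.coeff_mk, egf] at hc
  have hfac : ((n.factorial : ℂ))⁻¹ ≠ 0 :=
    inv_ne_zero (by exact_mod_cast n.factorial_ne_zero)
  have goal2 : ((n.factorial : ℂ))⁻¹ • S n
      = ((n.factorial : ℂ))⁻¹ • ∑ m ∈ Finset.range (n + 1),
          Polynomial.C ((n.choose m : ℂ) / (1 - lam) ^ s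
              * ∑ j ∈ Finset.range (s + 1),
                  (s.choose j : ℂ) * (-lam) ^ (s - j) * (S (n - m)).eval (j : ℂ))
            * H m := by
    rw [hc, ← Finset.sum_range_reflect, Finset.smul_sum]
    refine Finset.sum_congr rfl fun m hm => ?_
    have hm' : m ≤ n := Nat.lt_succ_iff.mp (Finset.mem_range.mp hm)
    simp only [Nat.succ_sub_one]
    rw [Nat.sub_sub_self hm']
    rw [smul_mul_smul_comm, ← Polynomial.smul_eq_C_mul, ← Polynomial.smul_eq_C_mul,
      smul_smul, smul_smul]
    congr 1
    simp only [hcst]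
    generalize (∑ j ∈ Finset.range (s + 1),
        (s.choose j : ℂ) * (-lam) ^ (s - j) * (S (n - m)).eval ((j : ℕ) : ℂ)) = Z
    rw [Nat.cast_choose ℂ hm']
    have hn : (n.factorial : ℂ) ≠ 0 := by exact_mod_cast n.factorial_ne_zero
    field_simp
  exact smul_right_injective (Polynomial ℂ) hfac goal2
end
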